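/- Let T be a non-crossing spanning tree on a set C of n ≥ 3 points in convex position, and let e be a border edge (an edge of the convex hull of C) not in T. Then there exists a chord (non-border edge) e' of T such that (T ∪ {e}) \ {e'} is a non-crossing spanning tree, provided T contains at least one chord. -/
import Mathlib


open Finset

noncomputable section
attribute [local instance] Classical.propDecidable

/-- The successor of `i` in the cyclic order on `Fin n`. -/
def nextIdx {n : ℕ} (i : Fin n) : Fin n := ⟨(i.val + 1) % n, Nat.mod_lt _ i.pos⟩

/-- `x` lies strictly between `a` and `b` in the cyclic order on `Fin n`
(going forwards from `a` to `b`). -/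
def CBtw {n : ℕ} (a x b : Fin n) : Prop :=
  0 < (x - a).val ∧ (x - a).val < (b - a).val

/-- Endpoints `a,b` and `c,d` interleave in the cyclic order:
exactly one of `c`, `d` lies strictly between `a` and `b`. -/
def CrossPair {n : ℕ} (a b c d : Fin n) : Prop :=
  Xor' (CBtw a c b) (CBtw a d b)

/-- Two chords of the convex polygon on `n` points (labeled in cyclic order)
cross in their interiors; combinatorially their endpoints interleave. -/
def Crosses {n : ℕ} (e f : Sym2 (Fin n)) : Prop :=
  ∃ a b c d : Fin n, e = s(a, b) ∧ f = s(c, d) ∧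
    a ≠ b ∧ a ≠ c ∧ a ≠ d ∧ b ≠ c ∧ b ≠ d ∧ c ≠ d ∧ CrossPair a b c d

/-- A border edge joins two consecutive points of the convex hull. -/
def IsBorderEdge {n : ℕ} (e : Sym2 (Fin n)) : Prop :=
  ∃ i : Fin n, e = s(i, nextIdx i)

/-- `T` is a non-crossing spanning tree on the `n` points (in convex position,
labeled cyclically by `Fin n`): loopless, `n - 1` edges, connected, and no two
edges cross. -/
def IsNCST (n : ℕ) (T : Finset (Sym2 (Fin n))) : Prop :=
  (∀ e ∈ T, ¬ e.IsDiag) ∧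
  T.card = n - 1 ∧
  (SimpleGraph.fromEdgeSet (↑T : Set (Sym2 (Fin n)))).Connected ∧
  ∀ e ∈ T, ∀ f ∈ T, ¬ Crosses e f

/-- One flip: exactly one edge is removed and one edge is added. -/
def FlipStep {n : ℕ} (T T' : Finset (Sym2 (Fin n))) : Prop :=
  (T \ T').card = 1 ∧ (T' \ T).card = 1

/-- A flip sequence: consecutive non-crossing spanning trees differing by one flip. -/
def IsFlipSeq (n : ℕ) (L : List (Finset (Sym2 (Fin n)))) : Prop :=
  (∀ T ∈ L, IsNCST n T) ∧ L.Chain' FlipStep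

/-- There is a flip sequence of length `ℓ` from `T₁` to `T₂`. -/
def HasFlipSeq (n : ℕ) (T₁ T₂ : Finset (Sym2 (Fin n))) (ℓ : ℕ) : Prop :=
  ∃ L : List (Finset (Sym2 (Fin n))), IsFlipSeq n L ∧ L.length = ℓ + 1 ∧
    L.head? = some T₁ ∧ L.getLast? = some T₂

/-- The side of the chord from `a` to `b`: the two endpoints together with all
points strictly between them in the cyclic order. -/
def sideOf {n : ℕ} (a b : Fin n) : Finset (Fin n) :=
  Finset.univ.filter (fun x => x = a ∨ x = b ∨ CBtw a x b)

/-- Holes of `T` (pairs of consecutive points not joined by an edge of `T`)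
with both endpoints in `A`, indexed by their first point. -/
def holesIn (n : ℕ) (T : Finset (Sym2 (Fin n))) (A : Finset (Fin n)) : Finset (Fin n) :=
  Finset.univ.filter (fun i => s(i, nextIdx i) ∉ T ∧ i ∈ A ∧ nextIdx i ∈ A)

/-- Degree of the side `sideOf a b` in `T'`: the number of endpoints (counted
with multiplicity over the chords of `T'`) lying inside the side. An endpoint
`v` of a chord `vw` is inside the side if `v` belongs to it and either `v` is
not an endpoint of the defining chord `ab` or both `v, w` are in the side. -/
def sideDegree (n : ℕ) (a b : Fin n) (T' : Finset (Sym2 (Fin n))) : ℕ :=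
  ((Finset.univ : Finset (Fin n × Fin n)).filter
    (fun p => s(p.1, p.2) ∈ T' ∧ ¬ IsBorderEdge s(p.1, p.2) ∧
      p.1 ∈ sideOf a b ∧ ((p.1 ≠ a ∧ p.1 ≠ b) ∨ p.2 ∈ sideOf a b))).card

/-- A nice pair of trees: the same border edges, and no common chord. -/
def NicePair (n : ℕ) (T₁ T₂ : Finset (Sym2 (Fin n))) : Prop :=
  IsNCST n T₁ ∧ IsNCST n T₂ ∧
  (∀ e, IsBorderEdge e → (e ∈ T₁ ↔ e ∈ T₂)) ∧
  (∀ e ∈ T₁, e ∈ T₂ → IsBorderEdge e)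



lemma sub_val' {n : ℕ} (x a : Fin n) :
    (x - a).val = if a.val ≤ x.val then x.val - a.val else x.val + n - a.val := by
  have hx := x.isLt; have ha := a.isLt
  rw [Fin.sub_def]
  simp only
  split_ifs with h
  · have hrw : n - a.val + x.val = (x.val - a.val) + n := by omega
    rw [hrw, Nat.add_mod_right, Nat.mod_eq_of_lt (by omega)]
  · rw [Nat.mod_eq_of_lt (by omega)]; omega

lemma nextIdx_val {n : ℕ} (i : Fin n) :
    (nextIdx i).val = if i.val + 1 = n then 0 else i.val + 1 := by
  have := i.isLt
  show (i.val + 1) % n = _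
  split_ifs with h
  · rw [h, Nat.mod_self]
  · exact Nat.mod_eq_of_lt (by omega)

lemma nextIdx_ne {n : ℕ} (hn : 2 ≤ n) (i : Fin n) : nextIdx i ≠ i := by
  have := i.isLt
  simp only [ne_eq, Fin.ext_iff, nextIdx_val]
  split_ifs <;> omega

lemma border_inj {n : ℕ} (hn : 3 ≤ n) {a b : Fin n}
    (h : s(a, nextIdx a) = s(b, nextIdx b)) : a = b := by
  have ha := a.isLt; have hb := b.isLt
  rw [Sym2.eq_iff] at h
  rcases h with ⟨h1, _⟩ | ⟨h1, h2⟩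
  · exact h1
  · simp only [Fin.ext_iff, nextIdx_val] at h1 h2 ⊢
    split_ifs at h1 h2 <;> omega

lemma not_cbtw_next {n : ℕ} (i x : Fin n) : ¬ CBtw i x (nextIdx i) := by
  have := i.isLt; have := x.isLt
  simp only [CBtw, sub_val', nextIdx_val, not_and, not_lt]
  split_ifs <;> omega

lemma cbtw_prev {n : ℕ} (hn : 3 ≤ n) {i x : Fin n} (hxi : x ≠ i) (hxni : x ≠ nextIdx i) :
    CBtw (nextIdx i) x i := by
  have := i.isLt; have := x.isLt
  simp only [ne_eq, Fin.ext_iff, nextIdx_val] at hxi hxni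
  simp only [CBtw, sub_val', nextIdx_val]
  split_ifs at hxi hxni ⊢ <;> omega

lemma cbtw_step {n : ℕ} (hn : 3 ≤ n) {a b i : Fin n}
    (hai : a ≠ i) (hani : a ≠ nextIdx i) (hbi : b ≠ i) (hbni : b ≠ nextIdx i) :
    (CBtw a i b ↔ CBtw a (nextIdx i) b) := by
  have := a.isLt; have := b.isLt; have := i.isLt
  simp only [ne_eq, Fin.ext_iff, nextIdx_val] at hai hani hbi hbni
  simp only [CBtw, sub_val', nextIdx_val]
  split_ifs at hai hani hbi hbni ⊢ <;> omega

lemma border_not_crosses_left {n : ℕ} (hn : 3 ≤ n) {e f : Sym2 (Fin n)}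
    (he : IsBorderEdge e) : ¬ Crosses e f := by
  obtain ⟨i, rfl⟩ := he
  rintro ⟨a, b, c, d, hab', hf', hab, hac, had, hbc, hbd, hcd, hx⟩
  rw [Sym2.eq_iff] at hab'
  unfold CrossPair Xor' at hx
  rcases hab' with ⟨rfl, rfl⟩ | ⟨rfl, rfl⟩
  · rcases hx with ⟨h1, _⟩ | ⟨h1, _⟩ <;> exact not_cbtw_next _ _ h1
  · rcases hx with ⟨_, h2⟩ | ⟨_, h2⟩
    · exact h2 (cbtw_prev hn (Ne.symm hbd) (Ne.symm had))
    · exact h2 (cbtw_prev hn (Ne.symm hbc) (Ne.symm hac))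

lemma border_not_crosses_right {n : ℕ} (hn : 3 ≤ n) {e f : Sym2 (Fin n)}
    (he : IsBorderEdge e) : ¬ Crosses f e := by
  obtain ⟨i, rfl⟩ := he
  rintro ⟨a, b, c, d, hf', hcd', hab, hac, had, hbc, hbd, hcd, hx⟩
  rw [Sym2.eq_iff] at hcd'
  unfold CrossPair Xor' at hx
  rcases hcd' with ⟨rfl, rfl⟩ | ⟨rfl, rfl⟩
  · have := cbtw_step hn hac (had) (hbc) (hbd)
    rcases hx with ⟨h1, h2⟩ | ⟨h1, h2⟩
    · exact h2 (this.mp h1)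
    · exact h2 (this.mpr h1)
  · have := cbtw_step hn had hac hbd hbc
    rcases hx with ⟨h1, h2⟩ | ⟨h1, h2⟩
    · exact h2 (this.mpr h1)
    · exact h2 (this.mp h1)

lemma conn_transfer {V : Type*} {G H : SimpleGraph V} (hG : G.Connected)
    (h : ∀ a b, G.Adj a b → H.Reachable a b) : H.Connected := by
  rw [SimpleGraph.connected_iff]
  refine ⟨fun x y => ?_, hG.nonempty⟩
  obtain ⟨w⟩ := hG.preconnected x y
  induction w with
  | nil => exact SimpleGraph.Reachable.refl _
  | cons ha _ ih => exact (h _ _ ha).trans ih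

lemma endpoint_arith {n : ℕ} (hn : 3 ≤ n) (i j : Fin n) (hij : j ≠ i) :
    ¬(((i - nextIdx i).val ≤ (j - nextIdx i).val) ↔
      ((nextIdx i - nextIdx i).val ≤ (j - nextIdx i).val)) := by
  have := i.isLt; have := j.isLt
  simp only [ne_eq, Fin.ext_iff] at hij
  simp only [sub_val', nextIdx_val]
  split_ifs <;> omega

lemma step_arith {n : ℕ} (hn : 3 ≤ n) (i j a : Fin n) (hai : a ≠ i) (haj : a ≠ j) :
    (((a - nextIdx i).val ≤ (j - nextIdx i).val) ↔
      ((nextIdx a - nextIdx i).val ≤ (j - nextIdx i).val)) := by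
  have := i.isLt; have := j.isLt; have := a.isLt
  simp only [ne_eq, Fin.ext_iff] at hai haj
  simp only [sub_val', nextIdx_val]
  split_ifs <;> omega

lemma walk_invariant {n : ℕ} (hn : 3 ≤ n) (T : Finset (Sym2 (Fin n))) (i j : Fin n)
    {u v : Fin n} (q : (SimpleGraph.fromEdgeSet (↑T : Set (Sym2 (Fin n)))).Walk u v)
    (hq : ∀ ed ∈ q.edges, IsBorderEdge ed ∧ ed ≠ s(i, nextIdx i) ∧ ed ≠ s(j, nextIdx j)) :
    (((u - nextIdx i).val ≤ (j - nextIdx i).val) ↔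
      ((v - nextIdx i).val ≤ (j - nextIdx i).val)) := by
  induction q with
  | nil => exact Iff.rfl
  | @cons u w v hadj q ih =>
    have hhead := hq s(u, w) (by simp [SimpleGraph.Walk.edges_cons])
    obtain ⟨⟨a, hae⟩, hne, hnf⟩ := hhead
    have hai : a ≠ i := by rintro rfl; exact hne hae
    have haj : a ≠ j := by rintro rfl; exact hnf hae
    have hstep := step_arith hn i j a hai haj
    have htail := ih (fun ed hed => hq ed (by simp [SimpleGraph.Walk.edges_cons, hed]))
    rw [Sym2.eq_iff] at hae
    rcases hae with ⟨rfl, rfl⟩ | ⟨rfl, rfl⟩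
    · exact hstep.trans htail
    · exact hstep.symm.trans htail

/-- Adding a missing border edge `e` to a non-crossing spanning tree `T` (with
at least one chord) allows removing some chord `e'` of `T` so that the result
is again a non-crossing spanning tree. -/
theorem border_edge_flip (n : ℕ) (hn : 3 ≤ n) (T : Finset (Sym2 (Fin n)))
    (hT : IsNCST n T) (e : Sym2 (Fin n)) (he : IsBorderEdge e) (heT : e ∉ T)
    (hchord : ∃ f ∈ T, ¬ IsBorderEdge f) :
    ∃ e' ∈ T, ¬ IsBorderEdge e' ∧ IsNCST n ((insert e T).erase e') := by
  classical
  obtain ⟨hloop, hcard, hconn, hcross⟩ := hT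
  obtain ⟨i, rfl⟩ := he
  set G := SimpleGraph.fromEdgeSet (↑T : Set (Sym2 (Fin n))) with hG
  -- a path from i to nextIdx i in G
  obtain ⟨w⟩ := hconn.preconnected i (nextIdx i)
  set p : G.Walk i (nextIdx i) := w.toPath.val with hpdef
  have hp : p.IsPath := w.toPath.prop
  have hpT : ∀ f ∈ p.edges, f ∈ T := by
    intro f hf
    have := p.edges_subset_edgeSet hf
    rw [hG, SimpleGraph.edgeSet_fromEdgeSet] at this
    exact this.1
  -- the path must contain a chord
  have hchordp : ∃ e' ∈ p.edges, ¬ IsBorderEdge e' := by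
    by_contra hall
    push_neg at hall
    -- every border edge other than e is on the path
    have hborder : ∀ j : Fin n, j ≠ i → s(j, nextIdx j) ∈ p.edges := by
      intro j hji
      by_contra hnot
      have hinv := walk_invariant hn T i j p (fun ed hed =>
        ⟨hall ed hed, fun h => heT (h ▸ hpT ed hed), fun h => hnot (h ▸ hed)⟩)
      exact endpoint_arith hn i j hji hinv
    -- so T consists exactly of the n-1 border edges ≠ e
    have hBsub : (Finset.univ.erase i).image (fun j : Fin n => s(j, nextIdx j)) ⊆ T := by
      intro f hf
      obtain ⟨j, hj, rfl⟩ := Finset.mem_image.mp hf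
      exact hpT _ (hborder j (Finset.ne_of_mem_erase hj))
    have hBcard : ((Finset.univ.erase i).image (fun j : Fin n => s(j, nextIdx j))).card
        = n - 1 := by
      rw [Finset.card_image_of_injective _ (fun a b h => border_inj hn h),
        Finset.card_erase_of_mem (Finset.mem_univ i), Finset.card_univ, Fintype.card_fin]
    have hTB : T = (Finset.univ.erase i).image (fun j : Fin n => s(j, nextIdx j)) :=
      (Finset.eq_of_subset_of_card_le hBsub (by rw [hBcard, hcard])).symm
    obtain ⟨f, hfT, hfb⟩ := hchord
    rw [hTB] at hfT
    obtain ⟨j, _, rfl⟩ := Finset.mem_image.mp hfT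
    exact hfb ⟨j, rfl⟩
  obtain ⟨e', he'p, he'b⟩ := hchordp
  have he'T : e' ∈ T := hpT e' he'p
  have hee' : s(i, nextIdx i) ≠ e' := fun h => he'b ⟨i, h.symm⟩
  refine ⟨e', he'T, he'b, ?_, ?_, ?_, ?_⟩
  -- loopless
  · intro f hf
    rcases Finset.mem_insert.mp (Finset.mem_of_mem_erase hf) with rfl | hfT
    · rw [Sym2.mk_isDiag_iff]
      exact fun h => nextIdx_ne (by omega) i h.symm
    · exact hloop f hfT
  -- cardinality
  · rw [Finset.card_erase_of_mem (Finset.mem_insert_of_mem he'T),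
      Finset.card_insert_of_notMem heT, hcard]
    omega
  -- connectivity
  · set H := SimpleGraph.fromEdgeSet (↑((insert s(i, nextIdx i) T).erase e') :
      Set (Sym2 (Fin n))) with hH
    have hHedge : ∀ f, f ∈ T → ¬ f.IsDiag → f ≠ e' → f ∈ H.edgeSet := by
      intro f hfT hfd hfe
      rw [hH, SimpleGraph.edgeSet_fromEdgeSet]
      exact ⟨Finset.mem_coe.mpr (Finset.mem_erase.mpr ⟨hfe, Finset.mem_insert_of_mem hfT⟩), hfd⟩
    have hHadj_e : H.Adj i (nextIdx i) := by
      rw [hH, SimpleGraph.fromEdgeSet_adj]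
      exact ⟨Finset.mem_coe.mpr (Finset.mem_erase.mpr ⟨hee', Finset.mem_insert_self _ _⟩),
        fun h => nextIdx_ne (by omega) i h.symm⟩
    have hreach : ∀ v, v ∈ p.support → H.Reachable v i := by
      intro v hv
      have hnodup : p.edges.Nodup := hp.isTrail.edges_nodup
      by_cases hcase : e' ∈ (p.takeUntil v hv).edges
      · -- e' in the first part, so second part avoids it
        have hdrop : e' ∉ (p.dropUntil v hv).edges := by
          intro hmem
          have := p.take_spec hv
          have hnd : ((p.takeUntil v hv).edges ++ (p.dropUntil v hv).edges).Nodup := by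
            rw [← SimpleGraph.Walk.edges_append, this]; exact hnodup
          exact (List.disjoint_of_nodup_append hnd) hcase hmem
        have hw : H.Walk v (nextIdx i) := (p.dropUntil v hv).transfer H (by
          intro f hf
          have hfp : f ∈ p.edges := by
            have := p.take_spec hv
            rw [← this, SimpleGraph.Walk.edges_append]
            exact List.mem_append_right _ hf
          have hfd : ¬ f.IsDiag := by
            have := p.edges_subset_edgeSet hfp
            rw [hG, SimpleGraph.edgeSet_fromEdgeSet] at this
            exact this.2
          exact hHedge f (hpT f hfp) hfd (fun h => hdrop (h ▸ hf)))
        exact hw.reachable.trans hHadj_e.symm.reachable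
      · have hw : H.Walk i v := (p.takeUntil v hv).transfer H (by
          intro f hf
          have hfp : f ∈ p.edges := p.edges_takeUntil_subset hv hf
          have hfd : ¬ f.IsDiag := by
            have := p.edges_subset_edgeSet hfp
            rw [hG, SimpleGraph.edgeSet_fromEdgeSet] at this
            exact this.2
          exact hHedge f (hpT f hfp) hfd (fun h => hcase (h ▸ hf)))
        exact hw.reachable.symm
    refine conn_transfer hconn (fun a b hab => ?_)
    rw [hG, SimpleGraph.fromEdgeSet_adj] at hab
    obtain ⟨habT, habne⟩ := hab
    by_cases hcase : s(a, b) = e'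
    · have ha : a ∈ p.support := p.fst_mem_support_of_mem_edges (hcase ▸ he'p)
      have hb : b ∈ p.support := p.snd_mem_support_of_mem_edges (hcase ▸ he'p)
      exact (hreach a ha).trans (hreach b hb).symm
    · exact (SimpleGraph.fromEdgeSet_adj _ |>.mpr
        ⟨Finset.mem_coe.mpr (Finset.mem_erase.mpr ⟨hcase, Finset.mem_insert_of_mem habT⟩),
          habne⟩).reachable
  -- non-crossing
  · intro f hf g hg
    have hf' := Finset.mem_insert.mp (Finset.mem_of_mem_erase hf)
    have hg' := Finset.mem_insert.mp (Finset.mem_of_mem_erase hg)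
    rcases hf' with rfl | hfT
    · exact border_not_crosses_left hn ⟨i, rfl⟩
    · rcases hg' with rfl | hgT
      · exact border_not_crosses_right hn ⟨i, rfl⟩
      · exact hcross f hfT g hgT
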